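/- Let $X$ be a Banach lattice and $P\colon X\to X$ a strictly positive projection. Then the range $P(X)$ is a vector sublattice of $X$. -/

import Mathlib

/-- The range of a strictly positive projection on a Banach lattice is a vector
sublattice: it is closed under the lattice operations of `X`. -/
theorem stmt4 {X : Type*} [NormedAddCommGroup X] [Lattice X] [HasSolidNorm X]
    [IsOrderedAddMonoid X] [NormedSpace ℝ X]
    [CompleteSpace X]
    (P : X →ₗ[ℝ] X) (hproj : ∀ x, P (P x) = P x)
    (hstrict : ∀ x : X, 0 < x → 0 < P x) :
    ∀ x ∈ Set.range P, ∀ y ∈ Set.range P,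
      x ⊔ y ∈ Set.range P ∧ x ⊓ y ∈ Set.range P := by
  have hpos : ∀ a : X, 0 ≤ a → 0 ≤ P a := by
    intro a ha
    rcases eq_or_lt_of_le ha with h | h
    · simp [← h]
    · exact (hstrict a h).le
  have hmono : ∀ a b : X, a ≤ b → P a ≤ P b := by
    intro a b hab
    have := hpos (b - a) (by simpa using hab)
    rw [map_sub] at this
    exact sub_nonneg.mp this
  have fixed : ∀ a ∈ Set.range P, P a = a := by
    rintro a ⟨w, rfl⟩
    exact hproj w
  have key : ∀ a : X, P a = a → ∀ b : X, P b = b → a ⊔ b ∈ Set.range P := by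
    intro a ha b hb
    set z := P (a ⊔ b) with hz
    have hza : a ≤ z := by
      calc a = P a := ha.symm
        _ ≤ z := hmono _ _ le_sup_left
    have hzb : b ≤ z := by
      calc b = P b := hb.symm
        _ ≤ z := hmono _ _ le_sup_right
    have hge : a ⊔ b ≤ z := sup_le hza hzb
    have hPzero : P (z - (a ⊔ b)) = 0 := by
      rw [map_sub, hz, hproj, sub_self]
    have heq : z - (a ⊔ b) = 0 := by
      rcases eq_or_lt_of_le (sub_nonneg.mpr hge) with h | h
      · exact h.symm
      · have := hstrict _ h
        rw [hPzero] at this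
        exact absurd this (lt_irrefl 0)
    have hzeq : z = a ⊔ b := sub_eq_zero.mp heq
    exact ⟨a ⊔ b, by rw [← hz, hzeq]⟩
  intro x hx y hy
  have hPx := fixed x hx
  have hPy := fixed y hy
  refine ⟨key x hPx y hPy, ?_⟩
  have hnx : P (-x) = -x := by rw [map_neg, hPx]
  have hny : P (-y) = -y := by rw [map_neg, hPy]
  obtain ⟨w, hw⟩ := key (-x) hnx (-y) hny
  refine ⟨-w, ?_⟩
  rw [map_neg, hw, neg_sup, neg_neg, neg_neg]
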